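/- Let X be a spiny symmetric set and k ≥ 1. Then X has degree at most k if (and only if) for each n ≥ k+1 and each nondegenerate word w ∈ 𝐒Xₙ (one with no identities and no repeated entries) satisfying d_{n−k}w, ..., d_n w ∈ 𝓑_{n−1}(X_{n−1}), we have w ∈ 𝓑ₙ(Xₙ). -/

import Mathlib

open CategoryTheory Opposite

/-- The skeleton of the category of finite nonempty sets: objects are natural
numbers `n`, standing for `[n] = {0, …, n}`, morphisms are all functions. -/
def Ups : Type := ℕ

/-- The natural number underlying an object of `Ups`. -/
def Ups.toNat : Ups → ℕ := fun n => n

/-- The object `[n]` of `Ups`. -/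
def Ups.of : ℕ → Ups := fun n => n

instance : Category Ups where
  Hom n m := Fin (n.toNat + 1) → Fin (m.toNat + 1)
  id _ := _root_.id
  comp f g := g ∘ f

/-- A symmetric set is a presheaf on `Ups`. -/
abbrev SymmSet := Upsᵒᵖ ⥤ Type

/-- The map `ε_{ij} : [1] → [n]` sending `0, 1` to `i, j`. -/
def eps (n : ℕ) (i j : Fin (n + 1)) : Ups.of 1 ⟶ Ups.of n :=
  fun k => if k = 0 then i else j

/-- The set of `n`-simplices of a symmetric set. -/
abbrev simp (X : SymmSet) (n : ℕ) : Type := X.obj (op (Ups.of n))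

/-- The Bousfield–Segal map `𝓑ₙ : Xₙ → X₁ⁿ`, `x ↦ (ε₀₁*x, …, ε₀ₙ*x)`. -/
def BS (X : SymmSet) (n : ℕ) (x : simp X n) : Fin n → simp X 1 :=
  fun k => X.map (eps n 0 k.succ).op x

/-- The Segal map `𝓔ₙ : Xₙ → X₁ⁿ`, `x ↦ (ε₀₁*x, ε₁₂*x, …, ε₍ₙ₋₁₎ₙ*x)`. -/
def ES (X : SymmSet) (n : ℕ) (x : simp X n) : Fin n → simp X 1 :=
  fun k => X.map (eps n k.castSucc k.succ).op x

/-- The canonical map `μ_X` to matrices, `x ↦ (ε_{ij}* x)_{ij}`. -/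
def muMat (X : SymmSet) (n : ℕ) (x : simp X n) :
    Fin (n + 1) → Fin (n + 1) → simp X 1 :=
  fun i j => X.map (eps n i j).op x

/-- A symmetric set is spiny if all Bousfield–Segal maps are injective. -/
def Spiny (X : SymmSet) : Prop := ∀ n, Function.Injective (BS X n)
/-- The matrix symmetric set `Mat(S)`: `n`-simplices are functions `[n]×[n] → S`. -/
def MatS (S : Type) : SymmSet where
  obj k := Fin (k.unop.toNat + 1) → Fin (k.unop.toNat + 1) → S
  map f := TypeCat.ofHom (fun M => fun a b => M (f.unop a) (f.unop b))
  map_id := by intros; rfl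
  map_comp := by intros; rfl

/-- An `n`-simplex is degenerate if it is `ρ* y` for a noninvertible surjection
`ρ : [n] ↠ [m]` and an `m`-simplex `y`. -/
def Degen (X : SymmSet) (n : ℕ) (x : simp X n) : Prop :=
  ∃ (m : ℕ) (ρ : Ups.of n ⟶ Ups.of m), Function.Surjective ρ ∧
    ¬ Function.Bijective ρ ∧ ∃ y : simp X m, x = X.map ρ.op y

/-- The `d`-skeleton of a symmetric set, as a symmetric subset. -/
def skel (X : SymmSet) (d : ℕ) : SymmSet where
  obj k := {x : X.obj k // ∃ (i : ℕ) (_ : i ≤ d) (α : k.unop ⟶ Ups.of i)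
      (y : simp X i), x = X.map α.op y}
  map f := TypeCat.ofHom (fun x => ⟨X.map f x.1, by
    obtain ⟨i, hi, α, y, hy⟩ := x.2
    refine ⟨i, hi, f.unop ≫ α, y, ?_⟩
    rw [hy, ← FunctorToTypes.map_comp_apply]
    rfl⟩)
  map_id := by
    intro k; ext x
    first | exact Subtype.ext (by simp) | simp
  map_comp := by
    intro k k' k'' f g; ext x
    first | exact Subtype.ext (by simp) | simp

/-- A symmetric set is `d`-skeletal when all simplices above dimension `d`
are degenerate. -/
def SkeletalLE (X : SymmSet) (d : ℕ) : Prop :=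
  ∀ n, d < n → ∀ x : simp X n, Degen X n x

/-- `X` has dimension `d` when `d` is the least integer such that `X` is
`d`-skeletal. -/
def HasDim (X : SymmSet) (d : ℕ) : Prop :=
  IsLeast {m | SkeletalLE X m} d

/-- A symmetric set is reduced when it has exactly one `0`-simplex. -/
def Reduced (X : SymmSet) : Prop :=
  Nonempty (simp X 0) ∧ Subsingleton (simp X 0)

/-- A partial group is a reduced spiny symmetric set. -/
def IsPartialGroup (X : SymmSet) : Prop := Reduced X ∧ Spiny X

/-- A partial group is trivial when it has no nonidentity elements. -/
def TrivialPG (X : SymmSet) : Prop := Subsingleton (simp X 1)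

/-- The order of a partial group: the number of its elements (edges). -/
noncomputable def orderPG (X : SymmSet) : ℕ := Nat.card (simp X 1)

/-- An edge is an identity if it is in the image of the degeneracy `X₀ → X₁`. -/
def isIdent (X : SymmSet) (e : simp X 1) : Prop :=
  ∃ v : simp X 0, e = X.map (Quiver.Hom.op
    ((fun _ => 0 : Fin 2 → Fin 1) : Ups.of 1 ⟶ Ups.of 0)) v

/-- The source vertex of an edge. -/
def srcE (X : SymmSet) (e : simp X 1) : simp X 0 :=
  X.map (Quiver.Hom.op ((fun _ => 0 : Fin 1 → Fin 2) : Ups.of 0 ⟶ Ups.of 1)) e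

/-- `X` has (higher Segal) degree at most `k`: for each starry word `w` of
length `n+1 ≥ k+1`, if the last `k+1` faces `d_{n+1-k} w, …, d_{n+1} w` of `w`
are Bousfield–Segal images of simplices, then so is `w`. -/
def HasDegLE (X : SymmSet) (k : ℕ) : Prop :=
  ∀ n, k ≤ n → ∀ w : Fin (n + 1) → simp X 1,
    (∀ a b, srcE X (w a) = srcE X (w b)) →
    (∀ i : Fin (n + 1), n ≤ (i : ℕ) + k →
      (fun j : Fin n => w (i.succAbove j)) ∈ Set.range (BS X n)) →
    w ∈ Set.range (BS X (n + 1))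

/-- `X` has degree `d`: `d` is the least `k ≥ 1` with `HasDegLE X k`. -/
def DegreeIs (X : SymmSet) (d : ℕ) : Prop :=
  IsLeast {k | 1 ≤ k ∧ HasDegLE X k} d

/-- `W`, with structure maps `i, j`, is a coproduct of `Y` and `Z` in the
category of partial groups. -/
def IsPGCoproduct (W Y Z : SymmSet) (i : Y ⟶ W) (j : Z ⟶ W) : Prop :=
  ∀ V : SymmSet, IsPartialGroup V → ∀ (f : Y ⟶ V) (g : Z ⟶ V),
    ∃! h : W ⟶ V, i ≫ h = f ∧ j ≫ h = g

/-- The nerve of a group `G`, as a symmetric set: an `n`-simplex is a matrix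
`(g_{ij})` of elements of `G` satisfying the cocycle condition. -/
def grpNerve (G : Type) [Group G] : SymmSet where
  obj k := {M : Fin (k.unop.toNat + 1) → Fin (k.unop.toNat + 1) → G //
      ∀ i j l, M i j * M j l = M i l}
  map f := TypeCat.ofHom (fun M => ⟨fun a b => M.1 (f.unop a) (f.unop b),
    fun i j l => M.2 (f.unop i) (f.unop j) (f.unop l)⟩)
  map_id := by intro k; ext M; first | exact Subtype.ext rfl | rfl
  map_comp := by intros; ext M; first | exact Subtype.ext rfl | rfl


namespace DegAux

open CategoryTheory Opposite

lemma map_map' (X : SymmSet) {a b c : Ups} (f : a ⟶ b) (g : b ⟶ c) (x : X.obj (op c)) :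
    X.map f.op (X.map g.op x) = X.map (f ≫ g).op x := by
  rw [op_comp, FunctorToTypes.map_comp_apply]

def vert (n : ℕ) (i : Fin (n + 1)) : Ups.of 0 ⟶ Ups.of n := fun _ => i
def sdeg : Ups.of 1 ⟶ Ups.of 0 := fun _ => 0
def vinc : Ups.of 0 ⟶ Ups.of 1 := fun _ => 0

lemma srcE_eps (X : SymmSet) (n : ℕ) (i j : Fin (n + 1)) (x : simp X n) :
    srcE X (X.map (eps n i j).op x) = X.map (vert n i).op x := by
  show X.map vinc.op (X.map (eps n i j).op x) = _
  rw [map_map']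
  have : (vinc ≫ eps n i j) = vert n i := by
    funext t
    show eps n i j (vinc t) = vert n i t
    simp [eps, vinc, vert]
    rfl
  rw [this]

lemma srcE_s (X : SymmSet) (v : simp X 0) : srcE X (X.map sdeg.op v) = v := by
  show X.map vinc.op (X.map sdeg.op v) = v
  rw [map_map']
  have : (vinc ≫ sdeg) = 𝟙 (Ups.of 0) := by
    funext t
    have h1 : ∀ s : Fin 1, (0 : Fin 1) = s := fun s => Subsingleton.elim _ _
    exact h1 t
  rw [this, op_id, FunctorToTypes.map_id_apply]

lemma s_vert (X : SymmSet) (n : ℕ) (i : Fin (n + 1)) (x : simp X n) :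
    X.map sdeg.op (X.map (vert n i).op x) = X.map (eps n i i).op x := by
  rw [map_map']
  have : (sdeg ≫ vert n i) = eps n i i := by
    funext t
    show (i : Fin (n + 1)) = eps n i i t
    rw [eps]
    exact (ite_self _).symm
  rw [this]

lemma val_succAbove {n : ℕ} (p : Fin (n + 1)) (i : Fin n) :
    (p.succAbove i).val = if i.val < p.val then i.val else i.val + 1 := by
  rw [Fin.succAbove]
  split_ifs with h1 h2 h3 <;> simp_all [Fin.lt_def]

lemma succAbove_succAbove {n : ℕ} (a : Fin (n + 2)) (i : Fin (n + 1)) (h : a.val ≤ i.val)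
    (m : Fin n) :
    a.succAbove (i.succAbove m) =
      (i.succ).succAbove ((⟨a.val, Nat.lt_of_le_of_lt h i.isLt⟩ : Fin (n + 1)).succAbove m) := by
  apply Fin.ext
  simp only [val_succAbove, Fin.val_succ]
  split_ifs <;> omega

lemma face_BS (X : SymmSet) (n : ℕ) (x : simp X (n + 1)) (a : Fin (n + 1)) :
    (fun m : Fin n => BS X (n + 1) x (a.succAbove m)) =
      BS X n (X.map (Quiver.Hom.op
        ((Fin.succAbove a.succ : Fin (n + 1) → Fin (n + 2)) : Ups.of n ⟶ Ups.of (n + 1))) x) := by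
  funext m
  show X.map (eps (n + 1) 0 (a.succAbove m).succ).op x
      = X.map (eps n 0 m.succ).op (X.map (Quiver.Hom.op
        ((Fin.succAbove a.succ : Fin (n + 1) → Fin (n + 2)) : Ups.of n ⟶ Ups.of (n + 1))) x)
  refine Eq.trans ?_ (map_map' X (a := Ups.of 1) (b := Ups.of n) (c := Ups.of (n + 1)) _ _ x).symm
  have he : (eps n 0 m.succ ≫ ((Fin.succAbove a.succ : Fin (n + 1) → Fin (n + 2)) :
      Ups.of n ⟶ Ups.of (n + 1))) = eps (n + 1) 0 (a.succAbove m).succ := by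
    funext t
    show Fin.succAbove a.succ (eps n 0 m.succ t) = eps (n + 1) 0 (a.succAbove m).succ t
    by_cases h : t = 0
    · subst h
      erw [eps, eps, if_pos rfl, if_pos rfl]
      have h0 : (Fin.castSucc (0 : Fin (n + 1))) < a.succ := by
        rw [Fin.castSucc_zero]; exact Fin.succ_pos a
      rw [Fin.succAbove_of_castSucc_lt a.succ 0 h0, Fin.castSucc_zero]
    · erw [eps, eps, if_neg h, if_neg h]
      exact Fin.succ_succAbove_succ a m
  erw [he]

noncomputable def gfun {n : ℕ} (a c : Fin (n + 1)) : Fin (n + 1) → Fin (n + 1) :=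
  fun j => if h : j = a then c else (Classical.choose (Fin.exists_succAbove_eq h)).succ

lemma reconstruct (X : SymmSet) (n : ℕ) (w : Fin (n + 1) → simp X 1) (a : Fin (n + 1))
    (x : simp X n) (hface : ∀ m : Fin n, w (a.succAbove m) = BS X n x m)
    (c : Fin (n + 1)) (hc : X.map (eps n 0 c).op x = w a) :
    w ∈ Set.range (BS X (n + 1)) := by
  refine ⟨X.map (Quiver.Hom.op ((Fin.cases 0 (gfun a c) : Fin (n + 2) → Fin (n + 1)) :
    Ups.of (n + 1) ⟶ Ups.of n)) x, ?_⟩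
  funext j
  show X.map (eps (n + 1) 0 j.succ).op (X.map (Quiver.Hom.op
      ((Fin.cases 0 (gfun a c) : Fin (n + 2) → Fin (n + 1)) : Ups.of (n + 1) ⟶ Ups.of n)) x) = w j
  refine (map_map' X (a := Ups.of 1) (b := Ups.of (n + 1)) (c := Ups.of n) _ _ x).trans ?_
  have he : (eps (n + 1) 0 j.succ ≫ ((Fin.cases 0 (gfun a c) : Fin (n + 2) → Fin (n + 1)) :
      Ups.of (n + 1) ⟶ Ups.of n)) = eps n 0 (gfun a c j) := by
    funext t
    show (Fin.cases 0 (gfun a c) : Fin (n + 2) → Fin (n + 1)) (eps (n + 1) 0 j.succ t)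
        = eps n 0 (gfun a c j) t
    by_cases h : t = 0
    · subst h
      erw [eps, eps, if_pos rfl, if_pos rfl]
      exact Fin.cases_zero
    · erw [eps, eps, if_neg h, if_neg h]
      exact Fin.cases_succ j
  erw [he]
  by_cases hja : j = a
  · subst hja
    rw [show gfun j c j = c from dif_pos rfl]
    exact hc
  · rw [show gfun a c j = (Classical.choose (Fin.exists_succAbove_eq hja)).succ from dif_neg hja]
    have hspec := Classical.choose_spec (Fin.exists_succAbove_eq hja)
    have := hface (Classical.choose (Fin.exists_succAbove_eq hja))
    rw [hspec] at this
    exact this.symm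

end DegAux

/-- A spiny symmetric set has degree at most `k` if and only if the degree
condition holds for all *nondegenerate* starry words: words with no identity
entries and no repeated entries. -/
theorem hasDegLE_iff_nondegenerate_words (X : SymmSet) (hX : Spiny X)
    (k : ℕ) (hk : 1 ≤ k) :
    HasDegLE X k ↔
      (∀ n, k ≤ n → ∀ w : Fin (n + 1) → simp X 1,
        (∀ a b, srcE X (w a) = srcE X (w b)) →
        (∀ a, ¬ isIdent X (w a)) →
        Function.Injective w →
        (∀ i : Fin (n + 1), n ≤ (i : ℕ) + k →
          (fun j : Fin n => w (i.succAbove j)) ∈ Set.range (BS X n)) →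
        w ∈ Set.range (BS X (n + 1))) := by
  open DegAux in
  constructor
  · intro H n hn w hsrc _ _ hfaces
    exact H n hn w hsrc hfaces
  · intro H
    have main : ∀ n, k ≤ n → ∀ w : Fin (n + 1) → simp X 1,
        (∀ a b, srcE X (w a) = srcE X (w b)) →
        (∀ i : Fin (n + 1), n ≤ (i : ℕ) + k →
          (fun j : Fin n => w (i.succAbove j)) ∈ Set.range (BS X n)) →
        w ∈ Set.range (BS X (n + 1)) := by
      intro n
      induction n using Nat.strong_induction_on with
      | _ n IH =>
        intro hn w hsrc hfaces
        by_cases hnd : (∀ b, ¬ isIdent X (w b)) ∧ Function.Injective w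
        · exact H n hn w hsrc hnd.1 hnd.2 hfaces
        · -- find a bad index
          have hbad : ∃ a : Fin (n + 1), isIdent X (w a) ∨ ∃ b, b ≠ a ∧ w a = w b := by
            rcases not_and_or.mp hnd with h | h
            · push_neg at h
              obtain ⟨a, ha⟩ := h
              exact ⟨a, Or.inl ha⟩
            · rw [Function.not_injective_iff] at h
              obtain ⟨p, q, hpq, hne⟩ := h
              exact ⟨p, Or.inr ⟨q, Ne.symm hne, hpq⟩⟩
          obtain ⟨a, ha⟩ := hbad
          -- step 1: the a-th face of w is a Bousfield–Segal image
          have hda : (fun m : Fin n => w (a.succAbove m)) ∈ Set.range (BS X n) := by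
            rcases le_or_gt n (a.val + k) with h | h
            · exact hfaces a h
            · obtain ⟨m, rfl⟩ : ∃ m, n = m + 1 := ⟨n - 1, by omega⟩
              apply IH m (Nat.lt_succ_self m) (by omega) (fun j => w (a.succAbove j))
                (fun p q => hsrc _ _)
              intro i' hi'
              have hai : a.val ≤ i'.val := by omega
              have ham : a.val < m + 1 := by omega
              obtain ⟨x, hx⟩ := hfaces i'.succ (by simp only [Fin.val_succ]; omega)
              refine ⟨X.map (Quiver.Hom.op
                ((Fin.succAbove (⟨a.val, ham⟩ : Fin (m + 1)).succ :
                  Fin (m + 1) → Fin (m + 2)) : Ups.of m ⟶ Ups.of (m + 1))) x, ?_⟩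
              funext m'
              show BS X m _ m' = w (a.succAbove (i'.succAbove m'))
              have h1 := congrFun (face_BS X m x (⟨a.val, ham⟩ : Fin (m + 1))).symm m'
              refine h1.trans ?_
              rw [succAbove_succAbove a i' hai m', hx]
          obtain ⟨x, hx⟩ := hda
          -- step 2: produce the extra entry
          rcases ha with hid | ⟨b, hb, hab⟩
          · obtain ⟨v, hv⟩ := hid
            have hn0 : 0 < n := by omega
            set m₀ : Fin n := ⟨0, hn0⟩ with hm₀
            have h2 : w (a.succAbove m₀) = BS X n x m₀ := (congrFun hx m₀).symm
            have h4 : srcE X (w a) = v := by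
              rw [hv]; exact srcE_s X v
            have h5 : srcE X (w (a.succAbove m₀)) = X.map (vert n 0).op x := by
              rw [h2]; exact srcE_eps X n 0 m₀.succ x
            have h6 : v = X.map (vert n 0).op x := by
              rw [← h4, hsrc a (a.succAbove m₀), h5]
            apply reconstruct X n w a x (fun m => (congrFun hx m).symm) 0
            rw [hv, h6]
            exact (s_vert X n 0 x).symm
          · obtain ⟨mb, hmb⟩ := Fin.exists_succAbove_eq hb
            apply reconstruct X n w a x (fun m => (congrFun hx m).symm) mb.succ
            have h7 := congrFun hx mb
            rw [hmb] at h7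
            exact h7.trans hab.symm
    exact main
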